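/- Let r ∈ [n] and let σ be a word consisting of the n−1 elements of [n]\{r} in some order. Then MIS(σ,r) is an A-B permutation: for every k ∈ {1,...,n} there exist integers A ≤ B with B − A = k − 1 such that the set of the first k entries of MIS(σ,r), i.e., {mi(σ,1,r), ..., mi(σ,k,r)}, equals the integer interval {A, A+1, ..., B}. -/

import Mathlib

open Polynomial

/-- The word (1, 2, ..., n) as a list of integers. -/
def W (n : ℕ) : List ℤ := (List.range n).map (fun i => (i : ℤ) + 1)

/-- Descent set of a word: 1-based indices i ∈ {1,...,m-1} with w(i) > w(i+1). -/
def descSet (w : List ℤ) : Finset ℕ :=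
  (Finset.Icc 1 (w.length - 1)).filter (fun i => w.getD (i - 1) 0 > w.getD i 0)

/-- Major index of a word: the sum of its descents. -/
def maj (w : List ℤ) : ℕ := ∑ i ∈ descSet w, i

/-- `dstat w k` is the number of descents of `w` that are ≥ k. -/
def dstat (w : List ℤ) (k : ℕ) : ℕ := ((descSet w).filter (fun i => k ≤ i)).card

/-- Major increment: the change in major index when `r` is inserted into `w`
at (1-based) position `k`. -/
def mi (w : List ℤ) (k : ℕ) (r : ℤ) : ℤ := (maj (w.insertIdx (k - 1) r) : ℤ) - (maj w : ℤ)

/-- The q-factorial [m]_q! = ∏_{i=1}^m (1 + q + ... + q^{i-1}), as a polynomial in q. -/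
noncomputable def qFact (m : ℕ) : Polynomial ℚ :=
  ∏ i ∈ Finset.range m, ∑ j ∈ Finset.range (i + 1), (X : Polynomial ℚ) ^ j

/-- The q-binomial coefficient [n choose a]_q = [n]_q!/([a]_q!·[n−a]_q!). -/
noncomputable def qBinom (n a : ℕ) : Polynomial ℚ := qFact n / (qFact a * qFact (n - a))

/-- The set of all shuffles of two words `θ` and `π` (words containing `θ` and `π`
as complementary subwords). -/
def shuffles (θ π : List ℤ) : Finset (List ℤ) :=
  (θ ++ π).permutations.toFinset.filter (fun σ => θ.Sublist σ ∧ π.Sublist σ)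

lemma W_eq (n : ℕ) : W n = List.map (fun i : ℕ => (i : ℤ) + 1) (List.range n) := by
  simp [W]
  induction (List.range n) with
  | nil => rfl
  | cons a l ih => simp_all

lemma maj_nil : maj ([] : List ℤ) = 0 := by simp [maj, descSet]

lemma maj_single (x : ℤ) : maj [x] = 0 := by simp [maj, descSet]

lemma insertIdx_concat (r x : ℤ) : ∀ (j : ℕ) (w : List ℤ), j ≤ w.length →
    (w ++ [x]).insertIdx j r = (w.insertIdx j r) ++ [x]
  | 0, w, _ => rfl
  | j+1, [], h => by simp at h
  | j+1, a::w, h => by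
      simp only [List.cons_append, List.insertIdx_succ_cons]
      rw [insertIdx_concat r x j w (by simpa using h)]

lemma maj_concat (w : List ℤ) (z x : ℤ) :
    maj ((w ++ [z]) ++ [x]) = maj (w ++ [z]) + if x < z then w.length + 1 else 0 := by
  unfold maj descSet
  rw [Finset.sum_filter, Finset.sum_filter]
  have hl1 : ((w ++ [z]) ++ [x]).length - 1 = w.length + 1 := by simp
  have hl2 : (w ++ [z]).length - 1 = w.length := by simp
  rw [hl1, hl2, Finset.sum_Icc_succ_top (by omega : 1 ≤ w.length + 1)]
  congr 1
  · apply Finset.sum_congr rfl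
    intro i hi
    rw [Finset.mem_Icc] at hi
    rw [List.getD_append (w ++ [z]) [x] 0 (i-1) (by simp; omega),
        List.getD_append (w ++ [z]) [x] 0 i (by simp; omega)]
  · rw [List.getD_append (w ++ [z]) [x] 0 (w.length + 1 - 1) (by simp),
        List.getD_append_right (w ++ [z]) [x] 0 (w.length + 1) (by simp),
        show w.length + 1 - 1 = w.length from rfl,
        List.getD_append_right w [z] 0 w.length (by simp)]
    simp

lemma length_insertIdx' (w : List ℤ) (r : ℤ) (j : ℕ) (h : j ≤ w.length) :
    (w.insertIdx j r).length = w.length + 1 := by rw [List.length_insertIdx, if_pos h]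

lemma mi_concat_le (w : List ℤ) (z x r : ℤ) (k : ℕ) (hk1 : 1 ≤ k) (hk : k ≤ w.length + 1) :
    mi ((w ++ [z]) ++ [x]) k r = mi (w ++ [z]) k r + (if x < z then 1 else 0) := by
  unfold mi
  have hj : k - 1 ≤ w.length := by omega
  rw [insertIdx_concat r x (k-1) (w++[z]) (by simp; omega),
      insertIdx_concat r z (k-1) w hj,
      maj_concat (w.insertIdx (k-1) r) z x, maj_concat w z x,
      length_insertIdx' w r (k-1) hj]
  push_cast
  by_cases hxz : x < z <;> simp [hxz] <;> ring

lemma mi_last (w : List ℤ) (z r : ℤ) :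
    mi (w ++ [z]) (w.length + 2) r = if r < z then (w.length : ℤ) + 1 else 0 := by
  unfold mi
  have h1 : w.length + 2 - 1 = (w ++ [z]).length := by simp
  rw [h1, List.insertIdx_length_self (l := w ++ [z]) (x := r), maj_concat w z r]
  push_cast
  by_cases hrz : r < z <;> simp [hrz]

lemma mi_penult (w : List ℤ) (z x r : ℤ) :
    mi ((w ++ [z]) ++ [x]) (w.length + 2) r =
      (if r < z then (w.length : ℤ) + 1 else 0) + (if x < r then (w.length : ℤ) + 2 else 0)
        - (if x < z then (w.length : ℤ) + 1 else 0) := by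
  unfold mi
  have h1 : w.length + 2 - 1 = (w ++ [z]).length := by simp
  rw [h1, insertIdx_concat r x (w ++ [z]).length (w++[z]) le_rfl,
      List.insertIdx_length_self (l := w ++ [z]) (x := r),
      maj_concat (w ++ [z]) r x, maj_concat w z r, maj_concat w z x]
  push_cast
  simp only [List.length_append, List.length_singleton]
  by_cases h1 : r < z <;> by_cases h2 : x < r <;> by_cases h3 : x < z <;>
    simp [h1, h2, h3] <;> push_cast <;> ring

lemma mi_nil_one (r : ℤ) : mi [] 1 r = 0 := by
  unfold mi
  simp [maj_nil, maj_single]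

lemma mi_single_one (x r : ℤ) : mi [x] 1 r = if x < r then 1 else 0 := by
  unfold mi
  have : ([x] : List ℤ).insertIdx 0 r = ([] ++ [r]) ++ [x] := by simp
  rw [show (1:ℕ) - 1 = 0 from rfl, this, maj_concat [] r x]
  by_cases h : x < r <;> simp [h, maj_single]

lemma mi_single_two (x r : ℤ) : mi [x] 2 r = if r < x then 1 else 0 := by
  have := mi_last [] x r
  simpa using this

lemma Icc_succ_insert (n : ℕ) : Finset.Icc 1 (n+1) = insert (n+1) (Finset.Icc 1 n) := by
  ext t; simp [Finset.mem_Icc]; omega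

lemma key (r : ℤ) : ∀ (σ : List ℤ), (∀ y ∈ σ, y < r ∨ r < y) →
    (∀ k : ℕ, 1 ≤ k → k ≤ σ.length + 1 → ∃ A : ℤ,
      (Finset.Icc 1 k).image (fun j => mi σ j r) = Finset.Icc A (A + (k:ℤ) - 1))
    ∧ (Finset.Icc 1 (σ.length + 1)).image (fun j => mi σ j r)
        = Finset.Icc 0 (σ.length : ℤ) := by
  intro σ
  induction σ using List.reverseRecOn with
  | nil =>
    intro _
    constructor
    · intro k hk1 hk2
      simp only [List.length_nil] at hk2
      have : k = 1 := by omega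
      subst this
      refine ⟨0, ?_⟩
      norm_num
      simp [mi_nil_one]
    · norm_num
      simp [mi_nil_one]
  | append_singleton σ' x ih =>
    intro hdist
    rcases σ'.eq_nil_or_concat with rfl | ⟨w, z, rfl⟩
    · -- σ = [x]
      clear ih
      have hx : x < r ∨ r < x := hdist x (by simp)
      simp only [List.nil_append, List.length_singleton]
      have h2 : (Finset.Icc 1 2).image (fun j => mi [x] j r) = Finset.Icc 0 1 := by
        have hic : Finset.Icc 1 2 = ({1, 2} : Finset ℕ) := by decide
        rw [hic]
        have e1 := mi_single_one x r
        have e2 := mi_single_two x r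
        rcases hx with h | h
        · rw [if_pos h] at e1; rw [if_neg (by omega)] at e2
          ext t
          simp only [Finset.image_insert, Finset.image_singleton, e1, e2,
            Finset.mem_insert, Finset.mem_singleton, Finset.mem_Icc]
          omega
        · rw [if_neg (by omega)] at e1; rw [if_pos h] at e2
          ext t
          simp only [Finset.image_insert, Finset.image_singleton, e1, e2,
            Finset.mem_insert, Finset.mem_singleton, Finset.mem_Icc]
          omega
      constructor
      · intro k hk1 hk2
        interval_cases k
        · refine ⟨mi [x] 1 r, ?_⟩
          norm_num
        · refine ⟨0, ?_⟩
          rw [h2]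
          norm_num
      · rw [h2]
        norm_num
    · -- σ = (w ++ [z]) ++ [x]
      simp only [List.concat_eq_append] at ih hdist ⊢
      have hz : z < r ∨ r < z := hdist z (by simp)
      have hx : x < r ∨ r < x := hdist x (by simp)
      have ihc := ih (fun y hy => hdist y (by simp [List.mem_append] at hy ⊢; tauto))
      obtain ⟨ih1, ih2⟩ := ihc
      have hF1 := mi_concat_le w z x r
      have hv1 := mi_penult w z x r
      have hv2 : mi ((w ++ [z]) ++ [x]) (w.length + 3) r
          = if r < x then (w.length : ℤ) + 2 else 0 := by
        have h := mi_last (w ++ [z]) x r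
        have hl : (w ++ [z]).length + 2 = w.length + 3 := by simp
        rw [hl] at h
        rw [h]
        by_cases hrx : r < x <;> simp [hrx] <;> omega
      have hg'last := mi_last w z r
      -- shift lemma
      have hshift : ∀ k : ℕ, 1 ≤ k → k ≤ w.length + 1 → ∀ A : ℤ,
          (Finset.Icc 1 k).image (fun j => mi (w ++ [z]) j r)
            = Finset.Icc A (A + (k:ℤ) - 1) →
          (Finset.Icc 1 k).image (fun j => mi ((w ++ [z]) ++ [x]) j r)
            = Finset.Icc (A + (if x < z then 1 else 0))
                (A + (if x < z then 1 else 0) + (k:ℤ) - 1) := by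
        intro k hk1 hk2 A hA
        have himg : (Finset.Icc 1 k).image (fun j => mi ((w ++ [z]) ++ [x]) j r)
            = ((Finset.Icc 1 k).image (fun j => mi (w ++ [z]) j r)).image
                (fun v => v + (if x < z then 1 else 0)) := by
          rw [Finset.image_image]
          apply Finset.image_congr
          intro j hj
          simp only [Finset.coe_Icc, Set.mem_Icc] at hj
          exact hF1 j hj.1 (le_trans hj.2 hk2)
        rw [himg, hA, Finset.image_add_right_Icc]
        congr 1
        ring
      -- master fact for k = M+2 and full set
      have hmaster : ∃ A2 : ℤ,
          (Finset.Icc 1 (w.length + 2)).image (fun j => mi ((w ++ [z]) ++ [x]) j r)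
            = Finset.Icc A2 (A2 + (w.length : ℤ) + 1) ∧
          insert (mi ((w ++ [z]) ++ [x]) (w.length + 3) r)
              (Finset.Icc A2 (A2 + (w.length : ℤ) + 1))
            = Finset.Icc 0 ((w.length : ℤ) + 2) := by
        obtain ⟨A', hA'⟩ := ih1 (w.length + 1) (by omega) (by simp)
        have hA'2 : (Finset.Icc 1 (w.length + 1)).image (fun j => mi (w ++ [z]) j r)
            = Finset.Icc A' (A' + (w.length : ℤ)) := by
          rw [hA']; congr 1 <;> (push_cast; try ring)
        have hfull' := ih2
        have hl2 : (w ++ [z]).length + 1 = w.length + 1 + 1 := by simp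
        rw [hl2, Icc_succ_insert (w.length + 1), Finset.image_insert, hA'2] at hfull'
        rw [hg'last] at hfull'
        have hlc : ((w ++ [z]).length : ℤ) = (w.length : ℤ) + 1 := by simp
        rw [hlc] at hfull'
        -- determine A'
        have hA'val : (r < z ∧ A' = 0) ∨ (z < r ∧ A' = 1) := by
          rcases hz with hzr | hrz
          · right
            refine ⟨hzr, ?_⟩
            rw [if_neg (by omega)] at hfull'
            have e := Finset.ext_iff.mp hfull'
            have e1 := e ((w.length : ℤ) + 1)
            have e2 := e (A' + (w.length : ℤ))
            simp only [Finset.mem_insert, Finset.mem_Icc] at e1 e2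
            omega
          · left
            refine ⟨hrz, ?_⟩
            rw [if_pos hrz] at hfull'
            have e := Finset.ext_iff.mp hfull'
            have e1 := e 0
            have e2 := e A'
            simp only [Finset.mem_insert, Finset.mem_Icc] at e1 e2
            omega
        have hS1 : (Finset.Icc 1 (w.length + 1)).image (fun j => mi ((w ++ [z]) ++ [x]) j r)
            = Finset.Icc (A' + (if x < z then 1 else 0))
                (A' + (if x < z then 1 else 0) + (w.length : ℤ)) := by
          have h := hshift (w.length + 1) (by omega) le_rfl A' (by rw [hA'])
          rw [h]
          congr 1 <;> (push_cast; try ring)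
        have hIcc2 : Finset.Icc 1 (w.length + 2)
            = insert (w.length + 2) (Finset.Icc 1 (w.length + 1)) := by
          ext t; simp [Finset.mem_Icc]; omega
        refine ⟨min (A' + (if x < z then 1 else 0)) (mi ((w ++ [z]) ++ [x]) (w.length + 2) r),
          ?_, ?_⟩
        · rw [hIcc2, Finset.image_insert, hS1, hv1]
          ext t
          simp only [Finset.mem_insert, Finset.mem_Icc, min_def]
          split_ifs <;> omega
        · rw [hv1, hv2]
          ext t
          simp only [Finset.mem_insert, Finset.mem_Icc, min_def]
          split_ifs <;> omega
      -- assemble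
      have hlen : ((w ++ [z]) ++ [x]).length = w.length + 2 := by simp
      constructor
      · intro k hk1 hk2
        rw [hlen] at hk2
        rcases le_or_gt k (w.length + 1) with h | h
        · obtain ⟨A, hA⟩ := ih1 k hk1 (by simp; omega)
          exact ⟨A + (if x < z then 1 else 0), hshift k hk1 h A hA⟩
        · obtain ⟨A2, hA2, hful⟩ := hmaster
          have hk' : k = w.length + 2 ∨ k = w.length + 3 := by omega
          rcases hk' with rfl | rfl
          · refine ⟨A2, ?_⟩
            rw [hA2]; congr 1 <;> (push_cast; try ring)
          · refine ⟨0, ?_⟩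
            have hIcc3 : Finset.Icc 1 (w.length + 3)
                = insert (w.length + 3) (Finset.Icc 1 (w.length + 2)) := by
              ext t; simp [Finset.mem_Icc]; omega
            rw [hIcc3, Finset.image_insert, hA2, hful]
            congr 1 <;> (push_cast; try ring)
      · obtain ⟨A2, hA2, hful⟩ := hmaster
        rw [hlen, show w.length + 2 + 1 = w.length + 3 from rfl]
        have hIcc3 : Finset.Icc 1 (w.length + 3)
            = insert (w.length + 3) (Finset.Icc 1 (w.length + 2)) := by
          ext t; simp [Finset.mem_Icc]; omega
        rw [hIcc3, Finset.image_insert, hA2, hful]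
        congr 1 <;> (push_cast; try ring)

/-- MIS(σ,r) is an A-B permutation: for every k ∈ {1,...,n} there are integers A ≤ B
with B - A = k - 1 such that the set of the first k entries of MIS(σ,r) is the
integer interval {A, A+1, ..., B}. -/
theorem mis_AB_permutation (n : ℕ) (r : ℤ) (hr : r ∈ W n) (σ : List ℤ)
    (hσ : σ.Perm ((W n).erase r)) (k : ℕ) (hk1 : 1 ≤ k) (hkn : k ≤ n) :
    ∃ A B : ℤ, A ≤ B ∧ B - A = (k : ℤ) - 1 ∧
      (Finset.Icc 1 k).image (fun j => mi σ j r) = Finset.Icc A B := by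
  have hnodup : (W n).Nodup := by
    rw [W_eq]
    refine List.Nodup.map ?_ ((List.nodup_range (n := n)))
    intro a b hab
    simp only at hab
    omega
  have hdist : ∀ y ∈ σ, y < r ∨ r < y := by
    intro y hy
    have hy' : y ∈ (W n).erase r := hσ.mem_iff.mp hy
    have := (hnodup.mem_erase_iff).mp hy'
    rcases lt_or_gt_of_ne this.1 with h | h
    · exact Or.inl h
    · exact Or.inr h
  have hlen : σ.length = n - 1 := by
    rw [hσ.length_eq, List.length_erase_of_mem hr, W_eq, List.length_map, List.length_range]
  have hn1 : 1 ≤ n := le_trans hk1 hkn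
  obtain ⟨A, hA⟩ := (key r σ hdist).1 k hk1 (by omega)
  refine ⟨A, A + (k : ℤ) - 1, by omega, by ring, hA⟩
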